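/- The square of the third theta-null has the eta-quotient representation θ₃(τ)² = η(2τ)^{10}/(η(τ)⁴·η(4τ)⁴) for all τ in the upper half-plane. -/

import Mathlib

open Complex

noncomputable section

/-- q = exp(2πiτ). -/
def qq (τ : ℂ) : ℂ := Complex.exp (2 * Real.pi * Complex.I * τ)

/-- The Dedekind eta function η(τ) = exp(πiτ/12)·∏_{n≥1} (1 − qⁿ). -/
def dedekindEta (τ : ℂ) : ℂ :=
  Complex.exp (Real.pi * Complex.I * τ / 12) * ∏' n : ℕ, (1 - qq τ ^ (n + 1))

/-- The Jacobi theta-null θ₃. -/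
def theta3 (τ : ℂ) : ℂ :=
  ∑' m : ℤ, Complex.exp (2 * Real.pi * Complex.I * τ * (m : ℂ) ^ 2)

namespace TP
open Finset Filter

/-- Gaussian binomial coefficient (in variable `Q`) via the Pascal recursion. -/
def G (Q : ℂ) : ℕ → ℤ → ℂ
  | 0 => fun k => if k = 0 then 1 else 0
  | (n+1) => fun k => G Q n (k-1) + Q ^ k * G Q n k

variable {Q : ℂ}

@[simp] lemma G_zero (k : ℤ) : G Q 0 k = if k = 0 then 1 else 0 := rfl
lemma G_succ (n : ℕ) (k : ℤ) : G Q (n+1) k = G Q n (k-1) + Q ^ k * G Q n k := rfl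

lemma G_of_neg : ∀ (n : ℕ) (k : ℤ), k < 0 → G Q n k = 0 := by
  intro n
  induction n with
  | zero => intro k hk; simp [hk.ne]
  | succ n ih =>
    intro k hk
    rw [G_succ, ih _ (by omega), ih _ hk]
    ring

lemma G_of_gt : ∀ (n : ℕ) (k : ℤ), (n : ℤ) < k → G Q n k = 0 := by
  intro n
  induction n with
  | zero => intro k hk; simp; omega
  | succ n ih =>
    intro k hk
    push_cast at hk
    rw [G_succ, ih _ (by omega), ih _ (by omega)]
    ring

/-- Partial products of the Euler function. -/
def F (Q : ℂ) (M : ℕ) : ℂ := ∏ i ∈ range M, (1 - Q ^ (i + 1))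

@[simp] lemma F_zero : F Q 0 = 1 := by simp [F]
lemma F_succ (M : ℕ) : F Q (M+1) = F Q M * (1 - Q ^ (M+1)) := by
  rw [F, prod_range_succ]; rfl

lemma F_ne_zero (hQ : ‖Q‖ < 1) (M : ℕ) : F Q M ≠ 0 := by
  refine prod_ne_zero_iff.2 fun i _ => ?_
  intro h
  have h2 : ‖Q ^ (i+1)‖ < 1 := by
    rw [norm_pow]
    exact pow_lt_one₀ (norm_nonneg _) hQ (by omega)
  rw [show Q ^ (i+1) = 1 by linear_combination -h] at h2
  simp at h2

lemma G_closed (hQ : ‖Q‖ < 1) :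
    ∀ (n k : ℕ), k ≤ n → G Q n (k : ℤ) = F Q n / (F Q k * F Q (n - k)) := by
  intro n
  induction n with
  | zero => intro k hk; interval_cases k; simp
  | succ n ih =>
    intro k hk
    rcases Nat.eq_zero_or_pos k with rfl | hk0
    · have h0 := ih 0 (Nat.zero_le n)
      simp only [Nat.cast_zero, Nat.sub_zero, F_zero, one_mul] at h0 ⊢
      rw [G_succ, G_of_neg _ _ (by omega), h0, zpow_zero,
        div_self (F_ne_zero hQ n), div_self (F_ne_zero hQ (n+1))]
      ring
    rcases eq_or_lt_of_le hk with rfl | hlt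
    · have hgt : G Q n ((n+1:ℕ):ℤ) = 0 := G_of_gt _ _ (by push_cast; omega)
      rw [G_succ, show ((n+1:ℕ):ℤ) - 1 = ((n:ℕ):ℤ) by push_cast; ring, hgt,
        ih n le_rfl]
      simp [Nat.sub_self, div_self (F_ne_zero hQ n), div_self (F_ne_zero hQ (n+1))]
    · have hk1 : k - 1 ≤ n := by omega
      have hkn : k ≤ n := by omega
      rw [G_succ, show ((k:ℕ):ℤ) - 1 = ((k-1 : ℕ) : ℤ) by push_cast [Nat.cast_sub hk0]; ring,
        ih _ hk1, ih _ hkn, zpow_natCast,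
        show n - (k-1) = n - k + 1 from by omega, show n + 1 - k = n - k + 1 from by omega]
      have e1 : F Q k = F Q (k-1) * (1 - Q ^ k) := by
        have := F_succ (Q := Q) (k-1); rwa [Nat.sub_add_cancel hk0] at this
      have e2 : F Q (n - k + 1) = F Q (n-k) * (1 - Q ^ (n - k + 1)) := F_succ (n-k)
      have e3 : F Q (n+1) = F Q n * (1 - Q ^ (n+1)) := F_succ n
      have key : Q ^ k * Q ^ (n - k + 1) = Q ^ (n + 1) := by
        rw [← pow_add]; congr 1; omega
      have h1 := F_ne_zero hQ (k-1)
      have h2 := F_ne_zero hQ (n-k)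
      have h3 : (1 : ℂ) - Q ^ k ≠ 0 := by
        have := F_ne_zero hQ k; rw [e1] at this; exact right_ne_zero_of_mul this
      have h4 : (1 : ℂ) - Q ^ (n - k + 1) ≠ 0 := by
        have := F_ne_zero hQ (n - k + 1); rw [e2] at this; exact right_ne_zero_of_mul this
      rw [e1, e2, e3]
      generalize hu : Q ^ k = u at key h3 ⊢
      generalize hv : Q ^ (n-k+1) = v at key h4 ⊢
      generalize hw : Q ^ (n+1) = w at key ⊢
      field_simp
      linear_combination (-(F Q n)) * key
lemma pascal2 (hQ0 : Q ≠ 0) :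
    ∀ (n : ℕ) (k : ℤ), G Q (n+1) k = Q ^ ((n : ℤ) + 1 - k) * G Q n (k-1) + G Q n k := by
  intro n
  induction n with
  | zero =>
    intro k
    rw [G_succ]
    by_cases h0 : k = 0
    · subst h0; norm_num
    by_cases h1 : k = 1
    · subst h1; norm_num
    have hk1 : ¬ (k - 1 = 0) := by omega
    simp [h0, h1, hk1]
  | succ n ih =>
    intro k
    conv_lhs => rw [G_succ (n+1) k, ih (k-1), ih k]
    conv_rhs => rw [G_succ n (k-1), G_succ n k]
    have h2 : Q ^ (k:ℤ) * Q ^ ((n:ℤ) + 1 - k) = Q ^ (((n+1:ℕ):ℤ) + 1 - k) * Q ^ (k-1) := by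
      rw [← zpow_add₀ hQ0, ← zpow_add₀ hQ0]; congr 1; push_cast; ring
    have h3 : Q ^ ((n:ℤ) + 1 - (k-1)) = Q ^ (((n+1:ℕ):ℤ) + 1 - k) := by congr 1; push_cast; ring
    linear_combination G Q n (k-1-1) * h3 + G Q n (k-1) * h2

lemma Grec (hQ0 : Q ≠ 0) (n : ℕ) (k : ℤ) :
    G Q (n+2) k = Q ^ ((n:ℤ) + 2 - k) * G Q n (k-2)
      + (1 + Q ^ ((n:ℤ) + 1)) * G Q n (k-1) + Q ^ k * G Q n k := by
  rw [show n + 2 = (n+1) + 1 from rfl, G_succ (n+1) k, pascal2 hQ0 n (k-1), pascal2 hQ0 n k]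
  have h1 : Q ^ ((n:ℤ) + 1 - (k-1)) = Q ^ ((n:ℤ) + 2 - k) := by congr 1; ring
  have h2 : Q ^ (k:ℤ) * Q ^ ((n:ℤ) + 1 - k) = Q ^ ((n:ℤ) + 1) := by
    rw [← zpow_add₀ hQ0]; congr 1; ring
  have h3 : (k : ℤ) - 1 - 1 = k - 2 := by ring
  rw [h1, h3]
  linear_combination G Q n (k-1) * h2



lemma one_add_ne (z : ℂ) (h : ‖z‖ < 1) : (1 : ℂ) + z ≠ 0 := by
  intro h0
  have hz : z = -1 := by linear_combination h0
  rw [hz] at h; simp at h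

lemma prod_aux (f : ℕ → ℂ) (hf : Summable f) (h1 : ∀ n, 1 + f n ≠ 0) :
    Multipliable (fun n => 1 + f n) ∧ (∏' n, (1 + f n)) ≠ 0 := by
  have hlog : Summable (fun n => Complex.log (1 + f n)) := by
    apply Summable.of_norm_bounded_eventually_nat (g := fun n => (3/2) * ‖f n‖) (hf.norm.mul_left _)
    have h0 : Tendsto (fun n => ‖f n‖) atTop (nhds 0) := by simpa using hf.tendsto_atTop_zero.norm
    filter_upwards [h0.eventually_lt_const (by norm_num : (0:ℝ) < 1/2)] with n hn
    exact Complex.norm_log_one_add_half_le_self hn.le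
  have heq := Complex.cexp_tsum_eq_tprod (f := fun n => 1 + f n) h1 hlog
  refine ⟨Complex.multipliable_of_summable_log hlog, ?_⟩
  rw [← heq]
  exact Complex.exp_ne_zero _

lemma norm_pow_lt {x : ℂ} (hx : ‖x‖ < 1) {k : ℕ} (hk : 1 ≤ k) : ‖x ^ k‖ < 1 := by
  rw [norm_pow]
  exact lt_of_le_of_lt (pow_le_pow_of_le_one (norm_nonneg x) hx.le hk |>.trans (by rw [pow_one]))
    hx

lemma sum_geo {x : ℂ} (hx : ‖x‖ < 1) (c d : ℕ) (hc : 1 ≤ c) :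
    Summable (fun n : ℕ => x ^ (c*n+d)) := by
  apply Summable.of_norm
  simp_rw [norm_pow]
  refine Summable.of_nonneg_of_le (fun n => pow_nonneg (norm_nonneg x) _) (fun n => ?_)
    (summable_geometric_of_lt_one (norm_nonneg x) hx)
  exact pow_le_pow_of_le_one (norm_nonneg x) hx.le (by nlinarith)

lemma prod_aux2 (f g : ℕ → ℂ) (hfg : ∀ n, f n = 1 + g n) (hg : Summable g)
    (hb : ∀ n, ‖g n‖ < 1) : Multipliable f ∧ (∏' n, f n) ≠ 0 := by
  obtain ⟨h1, h2⟩ := prod_aux g hg (fun n => one_add_ne _ (hb n))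
  refine ⟨h1.congr (fun n => (hfg n).symm), ?_⟩
  rwa [tprod_congr hfg]



lemma sum_rq (hQ : ‖Q‖ < 1) : Summable (fun i : ℕ => ‖Q‖^(i+1)) := by
  simp_rw [pow_succ]
  exact (summable_geometric_of_lt_one (norm_nonneg Q) hQ).mul_right _

lemma F_norm_ub (hQ : ‖Q‖ < 1) (M : ℕ) :
    ‖F Q M‖ ≤ Real.exp (∑' i : ℕ, ‖Q‖^(i+1)) := by
  rw [F, norm_prod]
  calc ∏ i ∈ range M, ‖1 - Q^(i+1)‖ ≤ ∏ i ∈ range M, Real.exp (‖Q‖^(i+1)) := by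
        refine Finset.prod_le_prod (fun i _ => norm_nonneg _) (fun i _ => ?_)
        calc ‖1 - Q^(i+1)‖ ≤ ‖(1:ℂ)‖ + ‖Q^(i+1)‖ := norm_sub_le _ _
          _ = 1 + ‖Q‖^(i+1) := by rw [norm_one, norm_pow]
          _ ≤ Real.exp (‖Q‖^(i+1)) := by
              have := Real.add_one_le_exp (‖Q‖^(i+1)); linarith
    _ = Real.exp (∑ i ∈ range M, ‖Q‖^(i+1)) := (Real.exp_sum _ _).symm
    _ ≤ _ := Real.exp_le_exp.2 (Summable.sum_le_tsum (range M) (fun i _ => by positivity) (sum_rq hQ))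

lemma factor_lb (hQ : ‖Q‖ < 1) {t : ℝ} (ht0 : 0 ≤ t) (ht : t ≤ ‖Q‖) :
    Real.exp (-(1-‖Q‖)⁻¹ * t) ≤ 1 - t := by
  have hr0 : (0:ℝ) ≤ ‖Q‖ := norm_nonneg Q
  have h1 : (0:ℝ) < 1 - ‖Q‖ := by linarith
  set s := (1-‖Q‖)⁻¹ * t with hs_def
  have hs0 : 0 ≤ s := mul_nonneg (inv_nonneg.2 h1.le) ht0
  have hs : s * (1-‖Q‖) = t := by
    rw [hs_def]; field_simp
  have key := Real.add_one_le_exp s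
  have hst : (0:ℝ) < 1 + s := by linarith
  rw [show -(1-‖Q‖)⁻¹ * t = -s by rw [hs_def]; ring, Real.exp_neg]
  have h2 : (Real.exp s)⁻¹ ≤ (1+s)⁻¹ := by
    apply inv_anti₀ hst; linarith
  apply h2.trans
  have hmul : 1 ≤ (1-t)*(1+s) := by nlinarith [mul_nonneg hs0 (sub_nonneg.2 ht)]
  calc (1+s)⁻¹ ≤ (1+s)⁻¹ * ((1-t)*(1+s)) :=
        le_mul_of_one_le_right (by positivity) hmul
    _ = (1-t) * ((1+s)⁻¹ * (1+s)) := by ring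
    _ = 1-t := by rw [inv_mul_cancel₀ hst.ne', mul_one]

lemma F_norm_lb (hQ : ‖Q‖ < 1) (M : ℕ) :
    Real.exp (-(1-‖Q‖)⁻¹ * (∑' i : ℕ, ‖Q‖^(i+1))) ≤ ‖F Q M‖ := by
  rw [F, norm_prod]
  have hT : ∑ i ∈ range M, ‖Q‖^(i+1) ≤ ∑' i : ℕ, ‖Q‖^(i+1) :=
    Summable.sum_le_tsum (range M) (fun i _ => by positivity) (sum_rq hQ)
  have h1 : (0:ℝ) < 1 - ‖Q‖ := by linarith
  calc Real.exp (-(1-‖Q‖)⁻¹ * (∑' i : ℕ, ‖Q‖^(i+1)))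
      ≤ Real.exp (-(1-‖Q‖)⁻¹ * (∑ i ∈ range M, ‖Q‖^(i+1))) := by
        apply Real.exp_le_exp.2
        have : (0:ℝ) ≤ (1-‖Q‖)⁻¹ := by positivity
        nlinarith
    _ = ∏ i ∈ range M, Real.exp (-(1-‖Q‖)⁻¹ * ‖Q‖^(i+1)) := by
        rw [← Real.exp_sum, ← Finset.mul_sum]
    _ ≤ ∏ i ∈ range M, ‖1 - Q^(i+1)‖ := by
        refine Finset.prod_le_prod (fun i _ => (Real.exp_pos _).le) (fun i _ => ?_)
        have ht : ‖Q‖^(i+1) ≤ ‖Q‖ := by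
          have := pow_le_pow_of_le_one (norm_nonneg Q) hQ.le (show 1 ≤ i+1 by omega)
          simpa using this
        refine (factor_lb hQ (by positivity) ht).trans ?_
        have := norm_sub_norm_le (1:ℂ) (Q^(i+1))
        rw [norm_one, norm_pow] at this
        linarith

/-- Uniform bound for the Gaussian binomials. -/
def Cb (rq : ℝ) : ℝ :=
  Real.exp (∑' i : ℕ, rq^(i+1)) * ((Real.exp (-(1-rq)⁻¹ * (∑' i : ℕ, rq^(i+1))))⁻¹)^2

lemma Cb_nonneg (rq : ℝ) : 0 ≤ Cb rq := by
  unfold Cb; positivity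

lemma G_norm_le (hQ : ‖Q‖ < 1) (n : ℕ) (k : ℤ) : ‖G Q n k‖ ≤ Cb ‖Q‖ := by
  rcases lt_or_ge k 0 with hk | hk
  · rw [G_of_neg n k hk, norm_zero]; exact Cb_nonneg _
  rcases lt_or_ge (n : ℤ) k with hk2 | hk2
  · rw [G_of_gt n k hk2, norm_zero]; exact Cb_nonneg _
  have hkn : k = ((k.toNat : ℕ) : ℤ) := (Int.toNat_of_nonneg hk).symm
  have hle : k.toNat ≤ n := by omega
  rw [hkn, G_closed hQ n k.toNat hle, norm_div, norm_mul]
  set c2 := Real.exp (-(1-‖Q‖)⁻¹ * (∑' i : ℕ, ‖Q‖^(i+1))) with hc2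
  have hc2pos : 0 < c2 := Real.exp_pos _
  have h1 := F_norm_ub hQ n
  have h2 := F_norm_lb hQ k.toNat
  have h3 := F_norm_lb hQ (n - k.toNat)
  rw [Cb]
  have hden : c2 * c2 ≤ ‖F Q k.toNat‖ * ‖F Q (n - k.toNat)‖ := by
    apply mul_le_mul h2 h3 hc2pos.le (norm_nonneg _)
  calc ‖F Q n‖ / (‖F Q k.toNat‖ * ‖F Q (n - k.toNat)‖)
      ≤ ‖F Q n‖ / (c2 * c2) := by
        gcongr
    _ ≤ Real.exp (∑' i : ℕ, ‖Q‖^(i+1)) / (c2 * c2) := by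
        gcongr
    _ = Real.exp (∑' i : ℕ, ‖Q‖^(i+1)) * (c2⁻¹)^2 := by
        field_simp


section X
variable {x : ℂ}

lemma hQnorm (hx : ‖x‖ < 1) : ‖x^2‖ < 1 := by
  rw [norm_pow]
  exact pow_lt_one₀ (norm_nonneg _) hx (by omega)

lemma hP2 (hx0 : x ≠ 0) (t : ℤ) : ((x^2 : ℂ))^t = x^(2*t) := by
  rw [← zpow_natCast x 2, ← zpow_mul]
  norm_num

/-- The summand. -/
def a (x : ℂ) (N : ℕ) (m : ℤ) : ℂ := x ^ (m^2) * G (x^2) (2*N) ((N:ℤ) + m)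

lemma a_support (N : ℕ) (m : ℤ) (h : (N : ℤ) < |m|) : a x N m = 0 := by
  rcases abs_cases m with ⟨he, _⟩ | ⟨he, _⟩ <;> rw [he] at h
  · rw [a, G_of_gt _ _ (by push_cast; omega), mul_zero]
  · rw [a, G_of_neg _ _ (by omega), mul_zero]

lemma a_summable (N : ℕ) : Summable (a x N) := by
  apply summable_of_ne_finset_zero (s := Finset.Icc (-(N:ℤ)) N)
  intro m hm
  simp only [Finset.mem_Icc, not_and_or, not_le] at hm
  exact a_support N m (by rcases abs_cases m with ⟨he,_⟩|⟨he,_⟩ <;> omega)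

lemma a_rec (hx0 : x ≠ 0) (N : ℕ) (m : ℤ) :
    a x (N+1) m = x^(2*(N:ℤ)+1) * a x N (m-1) + (1 + x^(4*(N:ℤ)+2)) * a x N m
      + x^(2*(N:ℤ)+1) * a x N (m+1) := by
  have hQ0 : (x^2 : ℂ) ≠ 0 := pow_ne_zero _ hx0
  rw [a, show 2*(N+1) = 2*N + 2 from by ring, show ((N+1:ℕ):ℤ) + m = (N:ℤ)+1+m from by push_cast; ring,
    Grec hQ0 (2*N) ((N:ℤ)+1+m)]
  rw [show ((2*N:ℕ):ℤ) + 2 - ((N:ℤ)+1+m) = N+1-m from by push_cast; ring,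
    show ((N:ℤ)+1+m) - 2 = (N:ℤ) + (m-1) from by ring,
    show ((N:ℤ)+1+m) - 1 = (N:ℤ) + m from by ring,
    show ((2*N:ℕ):ℤ) + 1 = 2*(N:ℤ)+1 from by push_cast; ring,
    hP2 hx0, hP2 hx0, hP2 hx0, a, a, a,
    show (N:ℤ) + (m+1) = ((N:ℤ)+1+m) from by ring]
  have e1 : x ^ (m^2) * x ^ (2*((N:ℤ)+1-m)) = x^(2*(N:ℤ)+1) * x^((m-1)^2) := by
    rw [← zpow_add₀ hx0, ← zpow_add₀ hx0]; congr 1; ring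
  have e2 : x ^ (m^2) * x ^ (2*((N:ℤ)+1+m)) = x^(2*(N:ℤ)+1) * x^((m+1)^2) := by
    rw [← zpow_add₀ hx0, ← zpow_add₀ hx0]; congr 1; ring
  have e3 : x ^ (2*(2*(N:ℤ)+1)) = x ^ (4*(N:ℤ)+2) := by congr 1; ring
  rw [e3]
  linear_combination G (x^2) (2*N) ((N:ℤ)+(m-1)) * e1 + G (x^2) (2*N) ((N:ℤ)+1+m) * e2


def S (x : ℂ) (N : ℕ) : ℂ := ∑' m : ℤ, a x N m

lemma S_zero : S x 0 = 1 := by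
  rw [S, tsum_eq_single 0]
  · simp [a]
  · intro b hb
    simp [a, G_zero, hb]

lemma S_succ (hx0 : x ≠ 0) (N : ℕ) : S x (N+1) = (1 + x^(2*(N:ℤ)+1))^2 * S x N := by
  have hs := a_summable (x := x) N
  have h1 : Summable (fun m : ℤ => a x N (m-1)) := by
    simpa [Function.comp_def] using (Equiv.subRight (1:ℤ)).summable_iff.2 hs
  have h2 : Summable (fun m : ℤ => a x N (m+1)) := by
    simpa [Function.comp_def] using (Equiv.addRight (1:ℤ)).summable_iff.2 hs
  have t1 : ∑' m : ℤ, a x N (m-1) = S x N := by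
    simpa [S] using (Equiv.subRight (1:ℤ)).tsum_eq (a x N)
  have t2 : ∑' m : ℤ, a x N (m+1) = S x N := by
    simpa [S] using (Equiv.addRight (1:ℤ)).tsum_eq (a x N)
  rw [S, tsum_congr (a_rec hx0 N),
    Summable.tsum_add ((h1.mul_left _).add (hs.mul_left _)) (h2.mul_left _),
    Summable.tsum_add (h1.mul_left _) (hs.mul_left _),
    tsum_mul_left, tsum_mul_left, tsum_mul_left, t1, t2, ← S]
  have h4 : x ^ (4*(N:ℤ)+2) = x ^ (2*(N:ℤ)+1) * x ^ (2*(N:ℤ)+1) := by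
    rw [← zpow_add₀ hx0]; congr 1; ring
  rw [h4]; ring

lemma S_closed (hx0 : x ≠ 0) (N : ℕ) :
    S x N = ∏ j ∈ range N, (1 + x^(2*(j:ℤ)+1))^2 := by
  induction N with
  | zero => simpa using S_zero
  | succ n ih => rw [S_succ hx0 n, ih, prod_range_succ]; ring

lemma euler_mult (hx : ‖x‖ < 1) :
    Multipliable (fun i : ℕ => 1 - (x^2:ℂ)^(i+1)) ∧ (∏' i : ℕ, (1 - (x^2:ℂ)^(i+1))) ≠ 0 := by
  apply prod_aux2 _ (fun i => -((x^2:ℂ)^(i+1))) (fun n => by ring)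
  · have := (sum_geo (hQnorm hx) 1 1 le_rfl).neg
    simpa using this
  · intro n; rw [norm_neg]; exact norm_pow_lt (hQnorm hx) (by omega)

lemma F_tendsto (hx : ‖x‖ < 1) :
    Tendsto (F (x^2)) atTop (nhds (∏' i : ℕ, (1 - (x^2:ℂ)^(i+1)))) :=
  (euler_mult hx).1.hasProd.tendsto_prod_nat

lemma a_tendsto (hx : ‖x‖ < 1) (m : ℤ) :
    Tendsto (fun N => a x N m) atTop
      (nhds (x^(m^2) * (∏' i : ℕ, (1 - (x^2:ℂ)^(i+1)))⁻¹)) := by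
  set P := ∏' i : ℕ, (1 - (x^2:ℂ)^(i+1)) with hP
  have hPne : P ≠ 0 := (euler_mult hx).2
  have hF := F_tendsto hx
  have hu : Tendsto (fun N : ℕ => ((N:ℤ) + m).toNat) atTop atTop := by
    refine tendsto_atTop.2 fun b => eventually_atTop.2 ⟨b + m.natAbs, fun N hN => ?_⟩
    omega
  have hv : Tendsto (fun N : ℕ => 2*N - ((N:ℤ) + m).toNat) atTop atTop := by
    refine tendsto_atTop.2 fun b => eventually_atTop.2 ⟨b + m.natAbs, fun N hN => ?_⟩
    omega
  have h2N : Tendsto (fun N : ℕ => 2*N) atTop atTop := by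
    refine tendsto_atTop.2 fun b => eventually_atTop.2 ⟨b, fun N hN => by omega⟩
  have hlim : Tendsto (fun N : ℕ => x^(m^2) *
      (F (x^2) (2*N) / (F (x^2) (((N:ℤ) + m).toNat) * F (x^2) (2*N - ((N:ℤ) + m).toNat))))
      atTop (nhds (x^(m^2) * (P / (P * P)))) :=
    (((hF.comp h2N).div ((hF.comp hu).mul (hF.comp hv))
      (mul_ne_zero hPne hPne))).const_mul _
  have hPP : x^(m^2) * (P / (P * P)) = x^(m^2) * P⁻¹ := by
    field_simp
  rw [hPP] at hlim
  apply hlim.congr'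
  filter_upwards [eventually_ge_atTop m.natAbs] with N hN
  have h0 : ((N:ℤ) + m) = ((((N:ℤ) + m).toNat : ℕ) : ℤ) := by omega
  have hle : ((N:ℤ) + m).toNat ≤ 2*N := by omega
  rw [a, h0, G_closed (hQnorm hx) (2*N) _ hle, Int.toNat_natCast]

lemma a_bound (hx : ‖x‖ < 1) (N : ℕ) (m : ℤ) :
    ‖a x N m‖ ≤ Cb ‖(x^2:ℂ)‖ * ‖x‖^(m.natAbs^2) := by
  rw [a, norm_mul]
  have h1 : ‖x ^ (m^2)‖ = ‖x‖^(m.natAbs^2) := by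
    rw [show (m^2 : ℤ) = ((m.natAbs^2 : ℕ) : ℤ) by push_cast; rw [_root_.sq_abs],
      zpow_natCast, norm_pow]
  rw [h1, mul_comm]
  exact mul_le_mul_of_nonneg_right (G_norm_le (hQnorm hx) _ _) (by positivity)

lemma bound_summable (hx : ‖x‖ < 1) :
    Summable (fun m : ℤ => Cb ‖(x^2:ℂ)‖ * ‖x‖^(m.natAbs^2)) := by
  apply Summable.mul_left
  have hnat : Summable (fun n : ℕ => ‖x‖^(n^2)) := by
    refine Summable.of_nonneg_of_le (fun n => by positivity) (fun n => ?_)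
      (summable_geometric_of_lt_one (norm_nonneg x) hx)
    refine pow_le_pow_of_le_one (norm_nonneg x) hx.le ?_
    nlinarith
  apply Summable.of_nat_of_neg
  · simpa using hnat
  · simpa using hnat

lemma prodm (hx : ‖x‖ < 1) (c d : ℕ) (hc : 1 ≤ c) (hd : 1 ≤ d) :
    Multipliable (fun n : ℕ => 1 - x^(c*n+d)) ∧ (∏' n : ℕ, (1 - x^(c*n+d))) ≠ 0 := by
  apply prod_aux2 _ (fun n => -(x^(c*n+d))) (fun n => by ring)
  · exact (sum_geo hx c d hc).neg
  · intro n; rw [norm_neg]; exact norm_pow_lt hx (by omega)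

lemma prodp (hx : ‖x‖ < 1) (c d : ℕ) (hc : 1 ≤ c) (hd : 1 ≤ d) :
    Multipliable (fun n : ℕ => 1 + x^(c*n+d)) ∧ (∏' n : ℕ, (1 + x^(c*n+d))) ≠ 0 := by
  apply prod_aux2 _ (fun n => x^(c*n+d)) (fun n => rfl)
  · exact sum_geo hx c d hc
  · intro n; exact norm_pow_lt hx (by omega)

theorem triple (hx : ‖x‖ < 1) (hx0 : x ≠ 0) :
    (∑' m : ℤ, x ^ (m^2)) =
      (∏' n : ℕ, (1 - x^(2*n+2))) * (∏' n : ℕ, (1 + x^(2*n+1)))^2 := by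
  set P := ∏' i : ℕ, (1 - (x^2:ℂ)^(i+1)) with hPdef
  have hPne : P ≠ 0 := (euler_mult hx).2
  have hlim1 : Tendsto (S x) atTop (nhds ((∑' m : ℤ, x^(m^2)) * P⁻¹)) := by
    have h : (∑' m : ℤ, x^(m^2)) * P⁻¹ = ∑' m : ℤ, (x^(m^2) * P⁻¹) := tsum_mul_right.symm
    rw [h]
    exact tendsto_tsum_of_dominated_convergence (bound_summable hx) (a_tendsto hx)
      (Filter.Eventually.of_forall (fun N m => a_bound hx N m))
  have hzp : ∀ j : ℕ, (1 + x^(2*(j:ℤ)+1))^2 = (1 + x^(2*j+1))^2 := fun j => by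
    rw [show (2*(j:ℤ)+1) = ((2*j+1 : ℕ) : ℤ) by push_cast; ring, zpow_natCast]
  have hDm : Multipliable (fun n : ℕ => 1 + x^(2*n+1)) := (prodp hx 2 1 (by omega) le_rfl).1
  have hD2 : Multipliable (fun n : ℕ => (1 + x^(2*n+1))^2) :=
    (hDm.mul hDm).congr (fun n => (sq _).symm)
  have hlim2 : Tendsto (S x) atTop (nhds (∏' n : ℕ, (1 + x^(2*n+1))^2)) := by
    have h := hD2.hasProd.tendsto_prod_nat
    refine h.congr fun N => ?_
    rw [S_closed hx0 N]
    exact prod_congr rfl fun j _ => (hzp j).symm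
  have huniq := tendsto_nhds_unique hlim1 hlim2
  have hPB : P = ∏' n : ℕ, (1 - x^(2*n+2)) :=
    tprod_congr fun i => by rw [← pow_mul, show 2*(i+1) = 2*i+2 from by ring]
  have hD2eq : (∏' n : ℕ, (1 + x^(2*n+1))^2) = (∏' n : ℕ, (1 + x^(2*n+1)))^2 := by
    rw [sq, ← Multipliable.tprod_mul hDm hDm]
    exact tprod_congr fun n => (sq _)
  calc (∑' m : ℤ, x ^ (m^2)) = ((∑' m : ℤ, x ^ (m^2)) * P⁻¹) * P := by field_simp
    _ = _ := by rw [huniq, hD2eq, hPB]; ring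

lemma prodm' (hx : ‖x‖ < 1) {f : ℕ → ℕ} (c d : ℕ) (hc : 1 ≤ c) (hd : 1 ≤ d)
    (hf : ∀ n, f n = c*n+d) :
    Multipliable (fun n : ℕ => 1 - x^(f n)) ∧ (∏' n : ℕ, (1 - x^(f n))) ≠ 0 := by
  obtain ⟨h1, h2⟩ := prodm hx c d hc hd
  refine ⟨h1.congr fun n => by rw [hf n], ?_⟩
  rwa [tprod_congr (fun n => by rw [hf n] : ∀ n : ℕ, (1 - x^(f n)) = 1 - x^(c*n+d))]

lemma prodp' (hx : ‖x‖ < 1) {f : ℕ → ℕ} (c d : ℕ) (hc : 1 ≤ c) (hd : 1 ≤ d)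
    (hf : ∀ n, f n = c*n+d) :
    Multipliable (fun n : ℕ => 1 + x^(f n)) ∧ (∏' n : ℕ, (1 + x^(f n))) ≠ 0 := by
  obtain ⟨h1, h2⟩ := prodp hx c d hc hd
  refine ⟨h1.congr fun n => by rw [hf n], ?_⟩
  rwa [tprod_congr (fun n => by rw [hf n] : ∀ n : ℕ, (1 + x^(f n)) = 1 + x^(c*n+d))]

theorem theta_sq (hx : ‖x‖ < 1) (hx0 : x ≠ 0) :
    (∑' m : ℤ, x ^ (m^2))^2 * ((∏' n:ℕ, (1 - x^(n+1)))^4 * (∏' n:ℕ, (1 - x^(4*n+4)))^4)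
      = (∏' n:ℕ, (1 - x^(2*n+2)))^10 := by
  obtain ⟨hB, hBne⟩ := prodm' hx (f := fun n => 2*n+2) 2 2 (by omega) (by omega) (fun n => rfl)
  obtain ⟨hC, hCne⟩ := prodm' hx (f := fun n => 4*n+4) 4 4 (by omega) (by omega) (fun n => rfl)
  obtain ⟨hD, hDne⟩ := prodp' hx (f := fun n => 2*n+1) 2 1 (by omega) (by omega) (fun n => rfl)
  obtain ⟨hE, hEne⟩ := prodm' hx (f := fun n => 2*n+1) 2 1 (by omega) (by omega) (fun n => rfl)
  obtain ⟨hFo, hFone⟩ := prodm' hx (f := fun n => 4*n+2) 4 2 (by omega) (by omega) (fun n => rfl)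
  -- split of A over even/odd
  have h₁ : (∏' k:ℕ, (1 - x^(2*k+1))) * (∏' k:ℕ, (1 - x^(2*k+2))) = ∏' n:ℕ, (1 - x^(n+1)) :=
    tprod_even_mul_odd (f := fun n : ℕ => 1 - x^(n+1)) hE hB
  -- split of B over even/odd
  have hFo' : Multipliable (fun k : ℕ => 1 - x^(2*(2*k)+2)) :=
    hFo.congr fun k => by
      show 1 - x^(4*k+2) = 1 - x^(2*(2*k)+2)
      rw [show 2*(2*k)+2 = 4*k+2 from by omega]
  have hC' : Multipliable (fun k : ℕ => 1 - x^(2*(2*k+1)+2)) :=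
    hC.congr fun k => by
      show 1 - x^(4*k+4) = 1 - x^(2*(2*k+1)+2)
      rw [show 2*(2*k+1)+2 = 4*k+4 from by omega]
  have h₂ : (∏' k:ℕ, (1 - x^(4*k+2))) * (∏' k:ℕ, (1 - x^(4*k+4))) = ∏' n:ℕ, (1 - x^(2*n+2)) := by
    have h := tprod_even_mul_odd (f := fun n : ℕ => 1 - x^(2*n+2)) hFo' hC'
    rw [← h]
    congr 1
    · exact tprod_congr fun k => by
        show 1 - x^(4*k+2) = 1 - x^(2*(2*k)+2)
        rw [show 2*(2*k)+2 = 4*k+2 from by omega]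
    · exact tprod_congr fun k => by
        show 1 - x^(4*k+4) = 1 - x^(2*(2*k+1)+2)
        rw [show 2*(2*k+1)+2 = 4*k+4 from by omega]
  -- termwise (1+t)(1-t) = 1-t²
  have h₃ : (∏' n:ℕ, (1 + x^(2*n+1))) * (∏' n:ℕ, (1 - x^(2*n+1))) = ∏' n:ℕ, (1 - x^(4*n+2)) := by
    rw [← Multipliable.tprod_mul hD hE]
    exact tprod_congr fun n => by ring
  have htri := triple hx hx0
  rw [htri, ← h₁]
  linear_combination ((∏' n:ℕ, (1 - x^(2*n+2)))^6 * (∏' n:ℕ, (1 - x^(4*n+4)))^4 *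
      ((∏' n:ℕ, (1 + x^(2*n+1))) * (∏' n:ℕ, (1 - x^(2*n+1))) + (∏' n:ℕ, (1 - x^(4*n+2)))) *
      (((∏' n:ℕ, (1 + x^(2*n+1))) * (∏' n:ℕ, (1 - x^(2*n+1))))^2 + (∏' n:ℕ, (1 - x^(4*n+2)))^2)) * h₃
    + ((∏' n:ℕ, (1 - x^(2*n+2)))^6 *
      ((∏' n:ℕ, (1 - x^(4*n+2))) * (∏' n:ℕ, (1 - x^(4*n+4))) + (∏' n:ℕ, (1 - x^(2*n+2)))) *
      (((∏' n:ℕ, (1 - x^(4*n+2))) * (∏' n:ℕ, (1 - x^(4*n+4))))^2 + (∏' n:ℕ, (1 - x^(2*n+2)))^2)) * h₂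

end X
end TP

open TP in
theorem theta3_sq_eta_quotient (τ : ℂ) (hτ : 0 < τ.im) :
    theta3 τ ^ 2 = dedekindEta (2 * τ) ^ 10 / (dedekindEta τ ^ 4 * dedekindEta (4 * τ) ^ 4) := by
  set x := qq τ with hxdef
  have hx0 : x ≠ 0 := Complex.exp_ne_zero _
  have hre : (2 * (Real.pi:ℂ) * I * τ).re = -(2 * Real.pi * τ.im) := by
    simp [Complex.mul_re, Complex.mul_im]
  have hx : ‖x‖ < 1 := by
    rw [hxdef, qq, Complex.norm_exp, hre]
    exact Real.exp_lt_one_iff.2 (by nlinarith [Real.pi_pos])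
  have hth : theta3 τ = ∑' m : ℤ, x ^ (m^2) := by
    rw [theta3]
    refine tsum_congr fun m => ?_
    rw [show 2*(Real.pi:ℂ)*I*τ*(m:ℂ)^2 = ((m^2:ℤ):ℂ) * (2*(Real.pi:ℂ)*I*τ) by push_cast; ring,
      Complex.exp_int_mul]
    rfl
  have hq2 : qq (2*τ) = x^2 := by
    rw [hxdef, qq, qq,
      show 2*(Real.pi:ℂ)*I*(2*τ) = ((2:ℕ):ℂ) * (2*(Real.pi:ℂ)*I*τ) by push_cast; ring,
      Complex.exp_nat_mul]
  have hq4 : qq (4*τ) = x^4 := by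
    rw [hxdef, qq, qq,
      show 2*(Real.pi:ℂ)*I*(4*τ) = ((4:ℕ):ℂ) * (2*(Real.pi:ℂ)*I*τ) by push_cast; ring,
      Complex.exp_nat_mul]
  have eA : dedekindEta τ
      = Complex.exp ((Real.pi:ℂ)*I*τ/12) * ∏' n:ℕ, (1 - x^(n+1)) := rfl
  have eB : dedekindEta (2*τ)
      = Complex.exp ((Real.pi:ℂ)*I*(2*τ)/12) * ∏' n:ℕ, (1 - x^(2*n+2)) := by
    rw [dedekindEta, hq2]
    congr 1
    exact tprod_congr fun n => by rw [← pow_mul, show 2*(n+1) = 2*n+2 from by ring]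
  have eC : dedekindEta (4*τ)
      = Complex.exp ((Real.pi:ℂ)*I*(4*τ)/12) * ∏' n:ℕ, (1 - x^(4*n+4)) := by
    rw [dedekindEta, hq4]
    congr 1
    exact tprod_congr fun n => by rw [← pow_mul, show 4*(n+1) = 4*n+4 from by ring]
  obtain ⟨-, hAne⟩ := TP.prodm' hx (f := fun n => n+1) 1 1 le_rfl le_rfl (fun n => by ring)
  obtain ⟨-, hCne⟩ := TP.prodm' hx (f := fun n => 4*n+4) 4 4 (by omega) (by omega) (fun n => rfl)
  have hexp : Complex.exp ((Real.pi:ℂ)*I*(2*τ)/12)^10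
      = Complex.exp ((Real.pi:ℂ)*I*τ/12)^4 * Complex.exp ((Real.pi:ℂ)*I*(4*τ)/12)^4 := by
    rw [← Complex.exp_nat_mul, ← Complex.exp_nat_mul, ← Complex.exp_nat_mul, ← Complex.exp_add]
    congr 1
    push_cast
    ring
  have key := TP.theta_sq hx hx0
  rw [hth, eA, eB, eC, mul_pow, mul_pow, mul_pow]
  rw [eq_div_iff (by
    apply mul_ne_zero (mul_ne_zero (pow_ne_zero _ (Complex.exp_ne_zero _)) (pow_ne_zero _ hAne))
    exact mul_ne_zero (pow_ne_zero _ (Complex.exp_ne_zero _)) (pow_ne_zero _ hCne))]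
  linear_combination (Complex.exp ((Real.pi:ℂ)*I*τ/12)^4 * Complex.exp ((Real.pi:ℂ)*I*(4*τ)/12)^4) * key
    - ((∏' n:ℕ, (1 - x^(2*n+2)))^10) * hexp
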